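/- Let V be a finite-dimensional inner product space, H: V → V self-adjoint, c ∈ V, Δ > 0, ν ≥ 0, and d* ∈ V such that (H + νI)d* = −c, ν(Δ − ‖d*‖) = 0, ‖d*‖ ≤ Δ, and H + νI is positive semidefinite. Then d* is a global minimizer of q(d) = (1/2)⟨Hd, d⟩ + ⟨c, d⟩ over the ball {d : ‖d‖ ≤ Δ}. -/

import Mathlib

open scoped RealInnerProductSpace

theorem trust_region_sufficiency
    (V : Type*) [NormedAddCommGroup V] [InnerProductSpace ℝ V] [FiniteDimensional ℝ V]
    (H : V →ₗ[ℝ] V) (hH : ∀ u v : V, ⟪H u, v⟫ = ⟪u, H v⟫)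
    (c : V) (Δ : ℝ) (hΔ : 0 < Δ)
    (ν : ℝ) (hν : 0 ≤ ν)
    (ds : V)
    (heq : H ds + ν • ds = -c)
    (hcompl : ν * (Δ - ‖ds‖) = 0)
    (hle : ‖ds‖ ≤ Δ)
    (hpsd : ∀ v : V, 0 ≤ ⟪H v + ν • v, v⟫) :
    ∀ d : V, ‖d‖ ≤ Δ →
      (1 / 2) * ⟪H ds, ds⟫ + ⟪c, ds⟫ ≤ (1 / 2) * ⟪H d, d⟫ + ⟪c, d⟫ := by
  intro d hd
  have h1 := hpsd (d - ds)
  have hc_d : ⟪c, d⟫ = -(⟪H ds, d⟫ + ν * ⟪ds, d⟫) := by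
    have : ⟪H ds + ν • ds, d⟫ = ⟪-c, d⟫ := by rw [heq]
    simp [inner_add_left, real_inner_smul_left, inner_neg_left,
      real_inner_comm c d] at this
    linarith
  have hc_ds : ⟪c, ds⟫ = -(⟪H ds, ds⟫ + ν * ⟪ds, ds⟫) := by
    have : ⟪H ds + ν • ds, ds⟫ = ⟪-c, ds⟫ := by rw [heq]
    simp [inner_add_left, real_inner_smul_left, inner_neg_left,
      real_inner_comm c ds] at this
    rw [real_inner_self_eq_norm_sq ds]
    linarith
  have hsym : ⟪H d, ds⟫ = ⟪H ds, d⟫ := by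
    rw [hH d ds, real_inner_comm]
  have hexp : ⟪H (d - ds) + ν • (d - ds), d - ds⟫ =
      ⟪H d, d⟫ - 2 * ⟪H ds, d⟫ + ⟪H ds, ds⟫
        + ν * (⟪d, d⟫ - 2 * ⟪ds, d⟫ + ⟪ds, ds⟫) := by
    simp [map_sub, inner_add_left, inner_sub_left, inner_sub_right,
      real_inner_smul_left, hsym, real_inner_comm ds d]
    ring
  rw [hexp] at h1
  have hdd : ⟪d, d⟫ = ‖d‖ ^ 2 := real_inner_self_eq_norm_sq d
  have hdsds : ⟪ds, ds⟫ = ‖ds‖ ^ 2 := real_inner_self_eq_norm_sq ds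
  have hnorm : ν * ⟪ds, ds⟫ ≥ ν * ⟪d, d⟫ := by
    have h2 : ν * ‖ds‖ = ν * Δ := by linarith [hcompl]
    have hnd : 0 ≤ ‖d‖ := norm_nonneg d
    have hnds : 0 ≤ ‖ds‖ := norm_nonneg ds
    have e1 : ν * ‖ds‖ ^ 2 = ν * Δ ^ 2 := by
      have := congrArg (· * (‖ds‖ + Δ)) h2
      ring_nf at this ⊢
      linarith
    have e2 : ν * ‖d‖ ^ 2 ≤ ν * Δ ^ 2 := by
      nlinarith [mul_nonneg (mul_nonneg hν (sub_nonneg.2 hd))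
        (by positivity : (0:ℝ) ≤ Δ + ‖d‖)]
    rw [hdd, hdsds]
    linarith
  rw [hc_d, hc_ds]
  nlinarith [h1, hnorm]
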